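/- Apply the sideways frieze recurrence to a 5-row array whose top and bottom rows are all 1's and whose initial zig-zag consists of formal variables x, y, z: define y' = (xz+1)/y, x' = (y'+1)/x, z' = (y'+1)/z in the field of rational functions ℚ(x,y,z). Then iterating this map (x,y,z) ↦ (x',y',z') six times returns the original triple (x,y,z). -/

import Mathlib

/-- The field of rational functions ℚ(x, y, z). -/
noncomputable abbrev RatFuncXYZ : Type := FractionRing (MvPolynomial (Fin 3) ℚ)

/-- The sideways frieze recurrence for a 5-row frieze pattern acting on a
zig-zag (x, y, z): y' = (xz+1)/y, x' = (y'+1)/x, z' = (y'+1)/z. -/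
noncomputable def friezeStep (p : RatFuncXYZ × RatFuncXYZ × RatFuncXYZ) :
    RatFuncXYZ × RatFuncXYZ × RatFuncXYZ :=
  ((((p.1 * p.2.2 + 1) / p.2.1) + 1) / p.1,
   (p.1 * p.2.2 + 1) / p.2.1,
   (((p.1 * p.2.2 + 1) / p.2.1) + 1) / p.2.2)

/-- Generic version of the frieze step over any field. -/
def gStep {K : Type*} [Field K] (p : K × K × K) : K × K × K :=
  ((((p.1 * p.2.2 + 1) / p.2.1) + 1) / p.1,
   (p.1 * p.2.2 + 1) / p.2.1,
   (((p.1 * p.2.2 + 1) / p.2.1) + 1) / p.2.2)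

lemma gStep_cube {K : Type*} [Field K] {x y z : K} (hx : x ≠ 0) (hy : y ≠ 0) (hz : z ≠ 0)
    (h1 : x * z + 1 ≠ 0) (h2 : x * z + y + 1 ≠ 0)
    (h3 : x * z + (y + 1) ^ 2 ≠ 0) (h4 : y + 1 ≠ 0) :
    gStep (gStep (gStep (x, y, z))) = (z, y, x) := by
  have hxyz : x * y * z ≠ 0 := mul_ne_zero (mul_ne_zero hx hy) hz
  have s1 : gStep (x, y, z) =
      ((x * z + y + 1) / (x * y), (x * z + 1) / y, (x * z + y + 1) / (y * z)) := by
    simp only [gStep, Prod.mk.injEq]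
    refine ⟨?_, trivial, ?_⟩ <;> field_simp <;> ring
  have hy2 : ((x * z + y + 1) / (x * y) * ((x * z + y + 1) / (y * z)) + 1) /
      ((x * z + 1) / y) = (x * z + (y + 1) ^ 2) / (x * y * z) := by
    rw [div_div_eq_mul_div, div_eq_div_iff h1 hxyz]
    field_simp
    ring
  have s2 : gStep ((x * z + y + 1) / (x * y), (x * z + 1) / y, (x * z + y + 1) / (y * z)) =
      ((y + 1) / z, (x * z + (y + 1) ^ 2) / (x * y * z), (y + 1) / x) := by
    simp only [gStep, Prod.mk.injEq]
    rw [hy2]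
    refine ⟨?_, rfl, ?_⟩
    · rw [div_div_eq_mul_div, div_eq_div_iff h2 hz]
      field_simp
      ring
    · rw [div_div_eq_mul_div, div_eq_div_iff h2 hx]
      field_simp
      ring
  have hy3 : ((y + 1) / z * ((y + 1) / x) + 1) / ((x * z + (y + 1) ^ 2) / (x * y * z)) = y := by
    rw [div_div_eq_mul_div, div_eq_iff h3]
    field_simp
    ring
  have s3 : gStep ((y + 1) / z, (x * z + (y + 1) ^ 2) / (x * y * z), (y + 1) / x) =
      (z, y, x) := by
    simp only [gStep, Prod.mk.injEq]
    rw [hy3]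
    refine ⟨?_, rfl, ?_⟩
    · rw [div_div_eq_mul_div, div_eq_iff h4]
      ring
    · rw [div_div_eq_mul_div, div_eq_iff h4]
      ring
  rw [s1, s2, s3]

lemma friezeStep_eq_gStep : friezeStep = gStep := rfl

theorem frieze_period_six :
    friezeStep^[6]
      (algebraMap (MvPolynomial (Fin 3) ℚ) RatFuncXYZ (MvPolynomial.X 0),
       algebraMap (MvPolynomial (Fin 3) ℚ) RatFuncXYZ (MvPolynomial.X 1),
       algebraMap (MvPolynomial (Fin 3) ℚ) RatFuncXYZ (MvPolynomial.X 2)) =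
      (algebraMap (MvPolynomial (Fin 3) ℚ) RatFuncXYZ (MvPolynomial.X 0),
       algebraMap (MvPolynomial (Fin 3) ℚ) RatFuncXYZ (MvPolynomial.X 1),
       algebraMap (MvPolynomial (Fin 3) ℚ) RatFuncXYZ (MvPolynomial.X 2)) := by
  set φ := algebraMap (MvPolynomial (Fin 3) ℚ) RatFuncXYZ with hφ
  have hne : ∀ p : MvPolynomial (Fin 3) ℚ,
      MvPolynomial.eval (fun _ => (1 : ℚ)) p ≠ 0 → φ p ≠ 0 := by
    intro p hp h
    apply hp
    have hp0 : p = 0 :=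
      (map_eq_zero_iff φ
        (IsFractionRing.injective (MvPolynomial (Fin 3) ℚ) RatFuncXYZ)).mp h
    simp [hp0]
  set x := φ (MvPolynomial.X 0)
  set y := φ (MvPolynomial.X 1)
  set z := φ (MvPolynomial.X 2)
  have hx : x ≠ 0 := hne _ (by norm_num)
  have hy : y ≠ 0 := hne _ (by norm_num)
  have hz : z ≠ 0 := hne _ (by norm_num)
  have h1 : x * z + 1 ≠ 0 := by
    have := hne (MvPolynomial.X 0 * MvPolynomial.X 2 + 1) (by norm_num)
    simpa [map_mul, map_add, map_one] using this
  have h2 : x * z + y + 1 ≠ 0 := by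
    have := hne (MvPolynomial.X 0 * MvPolynomial.X 2 + MvPolynomial.X 1 + 1) (by norm_num)
    simpa [map_mul, map_add, map_one] using this
  have h3 : x * z + (y + 1) ^ 2 ≠ 0 := by
    have := hne (MvPolynomial.X 0 * MvPolynomial.X 2 + (MvPolynomial.X 1 + 1) ^ 2) (by norm_num)
    simpa [map_mul, map_add, map_one, map_pow] using this
  have h4 : y + 1 ≠ 0 := by
    have := hne (MvPolynomial.X 1 + 1) (by norm_num)
    simpa [map_add, map_one] using this
  have h1' : z * x + 1 ≠ 0 := by rwa [mul_comm]
  have h2' : z * x + y + 1 ≠ 0 := by rwa [mul_comm]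
  have h3' : z * x + (y + 1) ^ 2 ≠ 0 := by rwa [mul_comm]
  show friezeStep^[6] (x, y, z) = (x, y, z)
  rw [friezeStep_eq_gStep]
  show gStep (gStep (gStep (gStep (gStep (gStep (x, y, z)))))) = (x, y, z)
  rw [gStep_cube hx hy hz h1 h2 h3 h4, gStep_cube hz hy hx h1' h2' h3' h4]
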